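/- Let α < 0 < β and let p(t,·) be a weak (distributional) solution on [0,1] of the transport equation ∂_t p = -∂_x( x(1-x)(xα + (1-x)β) p ) with nonnegative initial datum p^0 ∈ L¹([0,1]) of total mass 1 supported in (0,1). Then p(t,·) converges weakly-* as t → ∞ to the Dirac mass δ_{x*}, where x* = β/(β-α). -/

import Mathlib

open MeasureTheory Set

set_option maxHeartbeats 1000000

/-- A `C¹` nonincreasing cutoff: `1` on `(-∞, a]`, `0` on `[b, ∞)`. -/
lemma cutoff_exists (a b : ℝ) (hab : a < b) :
    ∃ g : ℝ → ℝ, ContDiff ℝ 1 g ∧ Continuous g ∧ (∀ x, 0 ≤ g x) ∧ (∀ x, g x ≤ 1) ∧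
      (∀ x, x ≤ a → g x = 1) ∧ (∀ x, b ≤ x → g x = 0) ∧
      (∀ x, deriv g x ≤ 0) ∧ (∀ x, x ≤ a ∨ b ≤ x → deriv g x = 0) := by
  set k : ℝ → ℝ := fun x => max 0 (min (x - a) (b - x)) with hk
  have hkc : Continuous k :=
    continuous_const.max ((continuous_id.sub continuous_const).min
      (continuous_const.sub continuous_id))
  have hknn : ∀ x, 0 ≤ k x := fun x => le_max_left _ _
  have hk0 : ∀ x, x ≤ a ∨ b ≤ x → k x = 0 := by
    intro x hx
    rcases hx with hx | hx
    · exact max_eq_left (le_trans (min_le_left _ _) (by linarith))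
    · exact max_eq_left (le_trans (min_le_right _ _) (by linarith))
  set s : ℝ → ℝ := fun x => ∫ t in a..x, k t with hs
  have hint : ∀ u v : ℝ, IntervalIntegrable k volume u v := fun u v =>
    hkc.intervalIntegrable u v
  set N : ℝ := s b with hN
  have hNpos : 0 < N := by
    refine intervalIntegral.intervalIntegral_pos_of_pos_on (hint a b) ?_ hab
    intro x hx
    have h1 : 0 < min (x - a) (b - x) := lt_min (by linarith [hx.1]) (by linarith [hx.2])
    exact lt_of_lt_of_le h1 (le_max_right _ _)
  have hsd : ∀ x, HasDerivAt s (k x) x := by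
    intro x
    exact intervalIntegral.integral_hasDerivAt_right (hint a x)
      (hkc.aestronglyMeasurable.stronglyMeasurableAtFilter) hkc.continuousAt
  have hs_left : ∀ x, x ≤ a → s x = 0 := by
    intro x hx
    have : EqOn k 0 (uIcc a x) := by
      intro t ht
      rw [uIcc_of_ge hx] at ht
      exact hk0 t (Or.inl ht.2)
    simp only [hs]
    rw [intervalIntegral.integral_congr this]; simp
  have hs_add : ∀ u v, s u + ∫ t in u..v, k t = s v := by
    intro u v
    exact intervalIntegral.integral_add_adjacent_intervals (hint a u) (hint u v)
  have hs_right : ∀ x, b ≤ x → s x = N := by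
    intro x hx
    have h0 : (∫ t in b..x, k t) = 0 := by
      have : EqOn k 0 (uIcc b x) := by
        intro t ht
        rw [uIcc_of_le hx] at ht
        exact hk0 t (Or.inr ht.1)
      rw [intervalIntegral.integral_congr this]; simp
    have := hs_add b x
    rw [h0, add_zero] at this
    rw [← this]
  have hs_nonneg : ∀ x, 0 ≤ s x := by
    intro x
    rcases le_or_gt x a with hx | hx
    · rw [hs_left x hx]
    · exact intervalIntegral.integral_nonneg hx.le fun u _ => hknn u
  have hs_leN : ∀ x, s x ≤ N := by
    intro x
    rcases le_or_gt b x with hx | hx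
    · rw [hs_right x hx]
    · have h1 : 0 ≤ ∫ t in x..b, k t :=
        intervalIntegral.integral_nonneg hx.le fun u _ => hknn u
      have := hs_add x b
      linarith [this]
  have hder : ∀ x, HasDerivAt (fun x => 1 - s x / N) (-(k x / N)) x := by
    intro x
    exact ((hasDerivAt_const x (1:ℝ)).sub ((hsd x).div_const N)).congr_deriv (by ring)
  have hdv : deriv (fun x => 1 - s x / N) = fun x => -(k x / N) :=
    funext fun x => (hder x).deriv
  have hC : ContDiff ℝ 1 (fun x => 1 - s x / N) := by
    rw [contDiff_one_iff_deriv]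
    exact ⟨fun x => (hder x).differentiableAt, hdv ▸ (hkc.div_const N).neg⟩
  refine ⟨fun x => 1 - s x / N, hC, hC.continuous, ?_, ?_, ?_, ?_, ?_, ?_⟩
  · intro x
    show 0 ≤ 1 - s x / N
    have := hs_leN x
    have h2 : s x / N ≤ 1 := by
      rw [div_le_one hNpos]; exact this
    linarith
  · intro x
    show 1 - s x / N ≤ 1
    have h1 : 0 ≤ s x / N := div_nonneg (hs_nonneg x) hNpos.le
    linarith
  · intro x hx
    show 1 - s x / N = 1
    rw [hs_left x hx]; simp
  · intro x hx
    show 1 - s x / N = 0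
    rw [hs_right x hx]
    field_simp
    norm_num
  · intro x
    rw [hdv]
    show -(k x / N) ≤ 0
    have := div_nonneg (hknn x) hNpos.le
    linarith
  · intro x hx
    rw [hdv]
    show -(k x / N) = 0
    rw [hk0 x hx]
    simp

lemma ae_mem_Icc {μ : Measure ℝ} (hs : μ (Set.Icc (0:ℝ) 1)ᶜ = 0) :
    ∀ᵐ x ∂μ, x ∈ Set.Icc (0:ℝ) 1 := by
  rw [MeasureTheory.ae_iff]
  have : {x : ℝ | ¬ x ∈ Set.Icc (0:ℝ) 1} = (Set.Icc (0:ℝ) 1)ᶜ := rfl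
  rw [this]
  exact hs

lemma integrable_of_cont {μ : Measure ℝ} [IsProbabilityMeasure μ]
    (hs : μ (Set.Icc (0:ℝ) 1)ᶜ = 0) {f : ℝ → ℝ} (hf : Continuous f) :
    Integrable f μ := by
  have h := Measure.restrict_eq_self_of_ae_mem (ae_mem_Icc hs)
  rw [← h]
  exact ContinuousOn.integrableOn_compact isCompact_Icc hf.continuousOn

lemma int_mono {μ : Measure ℝ} [IsProbabilityMeasure μ]
    (hs : μ (Set.Icc (0:ℝ) 1)ᶜ = 0) {f g : ℝ → ℝ} (hf : Continuous f) (hg : Continuous g)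
    (h : ∀ x ∈ Set.Icc (0:ℝ) 1, f x ≤ g x) : ∫ x, f x ∂μ ≤ ∫ x, g x ∂μ := by
  refine integral_mono_ae (integrable_of_cont hs hf) (integrable_of_cont hs hg) ?_
  filter_upwards [ae_mem_Icc hs] with x hx using h x hx

lemma int_nonneg {μ : Measure ℝ} (hs : μ (Set.Icc (0:ℝ) 1)ᶜ = 0) {f : ℝ → ℝ}
    (h : ∀ x ∈ Set.Icc (0:ℝ) 1, 0 ≤ f x) : 0 ≤ ∫ x, f x ∂μ := by
  refine integral_nonneg_of_ae ?_
  filter_upwards [ae_mem_Icc hs] with x hx using h x hx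

lemma int_nonpos {μ : Measure ℝ} (hs : μ (Set.Icc (0:ℝ) 1)ᶜ = 0) {f : ℝ → ℝ}
    (h : ∀ x ∈ Set.Icc (0:ℝ) 1, f x ≤ 0) : ∫ x, f x ∂μ ≤ 0 := by
  refine integral_nonpos_of_ae ?_
  filter_upwards [ae_mem_Icc hs] with x hx using h x hx

lemma antitone_of_hasDeriv {u r : ℝ → ℝ} {T : ℝ}
    (hd : ∀ t, T ≤ t → HasDerivAt u (r t) t) (hr : ∀ t, T ≤ t → r t ≤ 0) :
    AntitoneOn u (Set.Ici T) := by
  refine antitoneOn_of_deriv_nonpos (convex_Ici T) ?_ ?_ ?_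
  · exact fun t ht => (hd t ht).continuousAt.continuousWithinAt
  · intro t ht
    rw [interior_Ici] at ht
    exact (hd t ht.le).differentiableAt.differentiableWithinAt
  · intro t ht
    rw [interior_Ici] at ht
    rw [(hd t ht.le).deriv]
    exact hr t ht.le

/-- Weak-* convergence to a Dirac mass at the interior equilibrium
`x* = β/(β-α)` for weak measure-valued solutions of the transport equation
`∂_t p = -∂_x( x(1-x)(xα+(1-x)β) p )` with absolutely continuous initial datum
of mass one supported in `(0,1)`. -/
theorem transport_converges_to_dirac
    (α β : ℝ) (hα : α < 0) (hβ : 0 < β)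
    (μ : ℝ → Measure ℝ)
    (hprob : ∀ t, IsProbabilityMeasure (μ t))
    (hsupp : ∀ t, μ t (Set.Icc (0:ℝ) 1)ᶜ = 0)
    (hinit_ac : μ 0 ≪ volume)
    (hinit_supp : μ 0 (Set.Ioo (0:ℝ) 1)ᶜ = 0)
    (hweak : ∀ g : ℝ → ℝ, ContDiff ℝ 1 g → ∀ t : ℝ, 0 ≤ t →
      HasDerivAt (fun s => ∫ x, g x ∂(μ s))
        (∫ x, x * (1 - x) * (x * α + (1 - x) * β) * deriv g x ∂(μ t)) t) :
    ∀ g : ℝ → ℝ, Continuous g →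
      Filter.Tendsto (fun t => ∫ x, g x ∂(μ t)) Filter.atTop
        (nhds (g (β / (β - α)))) := by
  intro g hg
  have hba : (0:ℝ) < β - α := by linarith
  set c : ℝ := β / (β - α) with hcdef
  have hc0 : 0 < c := div_pos hβ hba
  have hc1 : c < 1 := by rw [hcdef, div_lt_one hba]; linarith
  have hcb : c * (β - α) = β := by rw [hcdef]; exact div_mul_cancel₀ β hba.ne'
  -- the linear factor identity
  have hlin : ∀ x : ℝ, x * α + (1 - x) * β = (β - α) * (c - x) := by
    intro x
    rw [hcdef]
    field_simp
    ring
  -- sign of the vector field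
  have hFpos : ∀ x ∈ Set.Icc (0:ℝ) 1, x ≤ c → 0 ≤ x * (1 - x) * (x * α + (1 - x) * β) := by
    intro x hx hxc
    rw [hlin x]
    have h1 : 0 ≤ x := hx.1
    have h2 : x ≤ 1 := hx.2
    exact mul_nonneg (mul_nonneg h1 (by linarith)) (mul_nonneg hba.le (by linarith))
  have hFneg : ∀ x ∈ Set.Icc (0:ℝ) 1, c ≤ x → x * (1 - x) * (x * α + (1 - x) * β) ≤ 0 := by
    intro x hx hxc
    rw [hlin x]
    have h1 : 0 ≤ x := hx.1
    have h2 : x ≤ 1 := hx.2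
    exact mul_nonpos_of_nonneg_of_nonpos (mul_nonneg h1 (by linarith))
      (mul_nonpos_of_nonneg_of_nonpos hba.le (by linarith))
  -- monotonicity machine
  have hmono : ∀ G : ℝ → ℝ, ContDiff ℝ 1 G →
      (∀ x ∈ Set.Icc (0:ℝ) 1, x * (1 - x) * (x * α + (1 - x) * β) * deriv G x ≤ 0) →
      AntitoneOn (fun t => ∫ x, G x ∂(μ t)) (Set.Ici 0) := by
    intro G hG hsign
    exact antitone_of_hasDeriv (fun t ht => hweak G hG t ht)
      (fun t _ => int_nonpos (hsupp t) hsign)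
  -- second moment and dissipation
  set m : ℝ → ℝ := fun t => ∫ x, (x - c)^2 ∂(μ t) with hm
  set W : ℝ → ℝ := fun t => ∫ x, x * (1 - x) * (x - c)^2 ∂(μ t) with hWdef
  have hVder : ∀ x : ℝ, HasDerivAt (fun y : ℝ => (y - c)^2) (2 * (x - c)) x := by
    intro x
    have h := ((hasDerivAt_id x).sub_const c).pow 2
    exact h.congr_deriv (by simp)
  have hVcd : ContDiff ℝ 1 (fun y : ℝ => (y - c)^2) :=
    (contDiff_id.sub contDiff_const).pow 2
  have hVdv : deriv (fun y : ℝ => (y - c)^2) = fun x => 2 * (x - c) :=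
    funext fun x => (hVder x).deriv
  have hVcont : Continuous (fun x : ℝ => (x - c)^2) := hVcd.continuous
  have hmder : ∀ t, 0 ≤ t → HasDerivAt m (-(2 * (β - α)) * W t) t := by
    intro t ht
    have h := hweak (fun y : ℝ => (y - c)^2) hVcd t ht
    have heq : (∫ x, x * (1 - x) * (x * α + (1 - x) * β)
          * deriv (fun y : ℝ => (y - c)^2) x ∂(μ t)) = -(2 * (β - α)) * W t := by
      rw [hWdef, ← integral_const_mul]
      congr 1
      funext x
      rw [hVdv]
      show x * (1 - x) * (x * α + (1 - x) * β) * (2 * (x - c))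
        = -(2 * (β - α)) * (x * (1 - x) * (x - c)^2)
      rw [hlin x]
      ring
    rw [← heq]
    exact h
  have hWnn : ∀ t, 0 ≤ W t := by
    intro t
    refine int_nonneg (hsupp t) ?_
    intro x hx
    have h1 : 0 ≤ x := hx.1
    have h2 : x ≤ 1 := hx.2
    exact mul_nonneg (mul_nonneg h1 (by linarith)) (sq_nonneg _)
  have hmnn : ∀ t, 0 ≤ m t := fun t => integral_nonneg fun x => sq_nonneg _
  have hmanti : AntitoneOn m (Set.Ici 0) := by
    refine antitone_of_hasDeriv hmder ?_
    intro t _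
    have h := mul_nonneg (by linarith : (0:ℝ) ≤ 2 * (β - α)) (hWnn t)
    nlinarith
  -- dissipation must come close to zero at arbitrarily late times
  have hWsmall : ∀ ε : ℝ, 0 < ε → ∃ t, 0 ≤ t ∧ W t < ε := by
    intro ε hε
    by_contra hcon
    push_neg at hcon
    set k : ℝ := 2 * (β - α) * ε with hk
    have hkpos : 0 < k := by rw [hk]; positivity
    have hφder : ∀ t, (0:ℝ) ≤ t → HasDerivAt (fun t => m t + k * t)
        (-(2 * (β - α)) * W t + k) t := by
      intro t ht
      have h2 : HasDerivAt (fun t : ℝ => k * t) k t := by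
        simpa using (hasDerivAt_id t).const_mul k
      exact (hmder t ht).add h2
    have hanti : AntitoneOn (fun t => m t + k * t) (Set.Ici 0) := by
      refine antitone_of_hasDeriv hφder ?_
      intro t ht
      have hWt : ε ≤ W t := hcon t ht
      rw [hk]
      have h := mul_le_mul_of_nonneg_left hWt (by linarith : (0:ℝ) ≤ 2 * (β - α))
      nlinarith
    set t1 : ℝ := max 0 ((m 0 + 1) / k) with ht1def
    have ht1 : (0:ℝ) ≤ t1 := le_max_left _ _
    have hkt : m 0 + 1 ≤ k * t1 := by
      have h := le_max_right 0 ((m 0 + 1) / k)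
      rw [div_le_iff₀ hkpos] at h
      calc m 0 + 1 ≤ t1 * k := h
        _ = k * t1 := mul_comm _ _
    have h := hanti (self_mem_Ici) (mem_Ici.2 ht1) ht1
    simp only at h
    have := hmnn t1
    linarith
  -- ae statements for the initial measure
  have hae0 : ∀ᵐ x ∂(μ 0), x ∈ Set.Ioo (0:ℝ) 1 := by
    rw [MeasureTheory.ae_iff]
    have : {x : ℝ | ¬ x ∈ Set.Ioo (0:ℝ) 1} = (Set.Ioo (0:ℝ) 1)ᶜ := rfl
    rw [this]
    exact hinit_supp
  -- boundary control near 0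
  have hleft : ∀ η : ℝ, 0 < η → ∃ G : ℝ → ℝ, Continuous G ∧ (∀ x, 0 ≤ G x) ∧
      (∃ δ : ℝ, 0 < δ ∧ ∀ x : ℝ, x ≤ δ → G x = 1) ∧
      (∀ t, 0 ≤ t → ∫ x, G x ∂(μ t) ≤ η) := by
    intro η hη
    have hex : ∀ n : ℕ, c / (2 * (n + 2)) < c / (n + 2) := by
      intro n
      apply div_lt_div_of_pos_left hc0 (by positivity)
      have : (0:ℝ) < (n:ℝ) + 2 := by positivity
      linarith
    choose G hCD hCont hNN hLE1 hEQ1 hEQ0 hDnp hD0 using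
      fun n : ℕ => cutoff_exists (c / (2 * (n + 2))) (c / (n + 2)) (hex n)
    have hbc : ∀ n : ℕ, c / ((n:ℝ) + 2) ≤ c := by
      intro n
      apply div_le_self hc0.le
      have : (0:ℝ) ≤ (n:ℝ) := Nat.cast_nonneg n
      linarith
    have hdecr : ∀ n : ℕ, AntitoneOn (fun t => ∫ x, G n x ∂(μ t)) (Set.Ici 0) := by
      intro n
      refine hmono (G n) (hCD n) ?_
      intro x hx
      rcases le_or_gt x (c / (n + 2)) with h | h
      · exact mul_nonpos_of_nonneg_of_nonpos (hFpos x hx (h.trans (hbc n))) (hDnp n x)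
      · rw [hD0 n x (Or.inr h.le), mul_zero]
    haveI := hprob 0
    have hlim : Filter.Tendsto (fun n => ∫ x, G n x ∂(μ 0)) Filter.atTop (nhds 0) := by
      have hlim' : Filter.Tendsto (fun n => ∫ x, G n x ∂(μ 0)) Filter.atTop
          (nhds (∫ x, (0:ℝ) ∂(μ 0))) := by
        refine tendsto_integral_of_dominated_convergence (μ := μ 0) (f := fun _ => (0:ℝ))
          (fun _ => (1:ℝ))
          (fun n => (hCont n).aestronglyMeasurable) (integrable_const 1) ?_ ?_
        · intro n
          filter_upwards with x
          rw [Real.norm_eq_abs, abs_le]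
          exact ⟨by linarith [hNN n x], hLE1 n x⟩
        · filter_upwards [hae0] with x hx
          obtain ⟨N, hN⟩ := exists_nat_gt (c / x)
          refine tendsto_atTop_of_eventually_const (i₀ := N) ?_
          intro n hn
          apply hEQ0 n x
          have hx0 : 0 < x := hx.1
          have h1 : c / x < (n:ℝ) + 2 := by
            have : (N:ℝ) ≤ (n:ℝ) := Nat.cast_le.2 hn
            linarith
          rw [div_lt_iff₀ hx0] at h1
          rw [div_le_iff₀ (by positivity : (0:ℝ) < (n:ℝ) + 2)]
          linarith [mul_comm x ((n:ℝ) + 2)]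
      simpa using hlim'
    obtain ⟨N, hN⟩ := (hlim.eventually_lt_const hη).exists
    refine ⟨G N, hCont N, hNN N, ⟨c / (2 * (N + 2)), by positivity, hEQ1 N⟩, ?_⟩
    intro t ht
    have h := hdecr N self_mem_Ici (mem_Ici.2 ht) ht
    simp only at h
    exact h.trans hN.le
  -- boundary control near 1
  have hright : ∀ η : ℝ, 0 < η → ∃ G : ℝ → ℝ, Continuous G ∧ (∀ x, 0 ≤ G x) ∧
      (∃ δ : ℝ, 0 < δ ∧ ∀ x : ℝ, 1 - δ ≤ x → G x = 1) ∧
      (∀ t, 0 ≤ t → ∫ x, G x ∂(μ t) ≤ η) := by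
    intro η hη
    have hc1' : (0:ℝ) < 1 - c := by linarith
    have hex : ∀ n : ℕ, 1 - (1 - c) / (n + 2) < 1 - (1 - c) / (2 * (n + 2)) := by
      intro n
      have : (1 - c) / (2 * ((n:ℝ) + 2)) < (1 - c) / ((n:ℝ) + 2) := by
        apply div_lt_div_of_pos_left hc1' (by positivity)
        have : (0:ℝ) < (n:ℝ) + 2 := by positivity
        linarith
      linarith
    choose Q hCD hCont hNN hLE1 hEQ1 hEQ0 hDnp hD0 using
      fun n : ℕ => cutoff_exists (1 - (1 - c) / (n + 2)) (1 - (1 - c) / (2 * (n + 2))) (hex n)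
    set G : ℕ → ℝ → ℝ := fun n x => 1 - Q n x with hGdef
    have hGder : ∀ n x, HasDerivAt (G n) (-(deriv (Q n) x)) x := by
      intro n x
      have h := (hasDerivAt_const x (1:ℝ)).sub (((hCD n).differentiable (by norm_num) x).hasDerivAt)
      exact h.congr_deriv (by simp)
    have hGCD : ∀ n, ContDiff ℝ 1 (G n) := fun n => contDiff_const.sub (hCD n)
    have hac : ∀ n : ℕ, c ≤ 1 - (1 - c) / ((n:ℝ) + 2) := by
      intro n
      have h := div_le_self hc1'.le (by linarith [Nat.cast_nonneg (α := ℝ) n] : (1:ℝ) ≤ (n:ℝ) + 2)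
      linarith
    have hdecr : ∀ n : ℕ, AntitoneOn (fun t => ∫ x, G n x ∂(μ t)) (Set.Ici 0) := by
      intro n
      refine hmono (G n) (hGCD n) ?_
      intro x hx
      rw [(hGder n x).deriv]
      rcases le_or_gt (1 - (1 - c) / (n + 2)) x with h | h
      · refine mul_nonpos_of_nonpos_of_nonneg (hFneg x hx ((hac n).trans h)) ?_
        have := hDnp n x
        linarith
      · rw [hD0 n x (Or.inl h.le)]
        simp
    haveI := hprob 0
    have hlim : Filter.Tendsto (fun n => ∫ x, G n x ∂(μ 0)) Filter.atTop (nhds 0) := by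
      have hlim' : Filter.Tendsto (fun n => ∫ x, G n x ∂(μ 0)) Filter.atTop
          (nhds (∫ x, (0:ℝ) ∂(μ 0))) := by
        refine tendsto_integral_of_dominated_convergence (μ := μ 0) (f := fun _ => (0:ℝ))
          (fun _ => (1:ℝ))
          (fun n => (continuous_const.sub (hCont n)).aestronglyMeasurable)
          (integrable_const 1) ?_ ?_
        · intro n
          filter_upwards with x
          rw [Real.norm_eq_abs, abs_le]
          constructor
          · have := hLE1 n x; simp only [hGdef]; linarith
          · have := hNN n x; simp only [hGdef]; linarith
        · filter_upwards [hae0] with x hx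
          obtain ⟨N, hN⟩ := exists_nat_gt ((1 - c) / (1 - x))
          refine tendsto_atTop_of_eventually_const (i₀ := N) ?_
          intro n hn
          have hx1 : 0 < 1 - x := by linarith [hx.2]
          have h1 : (1 - c) / (1 - x) < (n:ℝ) + 2 := by
            have : (N:ℝ) ≤ (n:ℝ) := Nat.cast_le.2 hn
            linarith
          rw [div_lt_iff₀ hx1] at h1
          have hxa : x ≤ 1 - (1 - c) / ((n:ℝ) + 2) := by
            have h2 : (1 - c) / ((n:ℝ) + 2) ≤ 1 - x := by
              rw [div_le_iff₀ (by positivity : (0:ℝ) < (n:ℝ) + 2)]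
              nlinarith
            linarith
          have := hEQ1 n x hxa
          simp [hGdef, this]
      simpa using hlim'
    obtain ⟨N, hN⟩ := (hlim.eventually_lt_const hη).exists
    refine ⟨G N, continuous_const.sub (hCont N), ?_, ⟨(1 - c) / (2 * (N + 2)), by positivity, ?_⟩, ?_⟩
    · intro x
      have := hLE1 N x
      simp only [hGdef]
      linarith
    · intro x hx
      have h := hEQ0 N x (by linarith)
      simp only [hGdef, h]
      ring
    · intro t ht
      have h := hdecr N self_mem_Ici (mem_Ici.2 ht) ht
      simp only at h
      exact h.trans hN.le
  -- the second moment tends to zero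
  have hwcont : Continuous (fun x : ℝ => x * (1 - x) * (x - c)^2) :=
    (continuous_id.mul (continuous_const.sub continuous_id)).mul
      ((continuous_id.sub continuous_const).pow 2)
  have hmlim : Filter.Tendsto m Filter.atTop (nhds 0) := by
    rw [Metric.tendsto_atTop]
    intro ε hε
    set ε' : ℝ := min (ε/8) 1 with hε'def
    have hε'pos : 0 < ε' := lt_min (by linarith) one_pos
    have hε'le : ε' ≤ ε/8 := min_le_left _ _
    obtain ⟨G0, hG0c, hG0nn, ⟨δ0, hδ0, hG0one⟩, hG0int⟩ := hleft (ε/8) (by linarith)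
    obtain ⟨G1, hG1c, hG1nn, ⟨δ1, hδ1, hG1one⟩, hG1int⟩ := hright (ε/8) (by linarith)
    set cK : ℝ := δ0 * δ1 * ε' with hcKdef
    have hcKpos : 0 < cK := by positivity
    obtain ⟨t0, ht0, hWt0⟩ := hWsmall (cK * (ε/8)) (by positivity)
    haveI := hprob t0
    have hpt : ∀ x ∈ Set.Icc (0:ℝ) 1,
        (x - c)^2 ≤ ε' + (G0 x + (G1 x + x * (1 - x) * (x - c)^2 / cK)) := by
      intro x hx
      have h1 : 0 ≤ x := hx.1
      have h2 : x ≤ 1 := hx.2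
      have hwnn : 0 ≤ x * (1 - x) * (x - c)^2 / cK :=
        div_nonneg (mul_nonneg (mul_nonneg h1 (by linarith)) (sq_nonneg _)) hcKpos.le
      have hsq1 : (x - c)^2 ≤ 1 := by
        nlinarith [mul_nonneg (by linarith : (0:ℝ) ≤ 1 - (x - c))
          (by linarith : (0:ℝ) ≤ 1 + (x - c))]
      have hg0 := hG0nn x
      have hg1 := hG1nn x
      by_cases hcase : (x - c)^2 ≤ ε'
      · linarith
      by_cases h3 : x ≤ δ0
      · have he := hG0one x h3
        linarith
      by_cases h4 : 1 - δ1 ≤ x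
      · have he := hG1one x h4
        linarith
      push_neg at hcase h3 h4
      have e1 : δ0 * δ1 ≤ x * (1 - x) := by nlinarith
      have hw : cK ≤ x * (1 - x) * (x - c)^2 := by
        rw [hcKdef]
        calc δ0 * δ1 * ε' ≤ (x * (1 - x)) * (x - c)^2 :=
              mul_le_mul e1 hcase.le hε'pos.le (by nlinarith)
          _ = x * (1 - x) * (x - c)^2 := by ring
      have hone : (1:ℝ) ≤ x * (1 - x) * (x - c)^2 / cK := (one_le_div hcKpos).2 hw
      linarith
    have hmon := int_mono (μ := μ t0) (g := fun x => ε' + (G0 x + (G1 x + x * (1 - x) * (x - c)^2 / cK))) (hsupp t0) hVcont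
      (continuous_const.add (hG0c.add (hG1c.add (hwcont.div_const cK)))) hpt
    have i1 : Integrable G0 (μ t0) := integrable_of_cont (hsupp t0) hG0c
    have i2 : Integrable G1 (μ t0) := integrable_of_cont (hsupp t0) hG1c
    have iw : Integrable (fun x : ℝ => x * (1 - x) * (x - c)^2 / cK) (μ t0) :=
      integrable_of_cont (hsupp t0) (hwcont.div_const cK)
    have iA : Integrable (fun x : ℝ => G1 x + x * (1 - x) * (x - c)^2 / cK) (μ t0) := i2.add iw
    have iB : Integrable (fun x : ℝ => G0 x + (G1 x + x * (1 - x) * (x - c)^2 / cK)) (μ t0) :=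
      i1.add iA
    rw [integral_add (integrable_const ε') iB, integral_add i1 iA,
      integral_add i2 iw, integral_const, integral_div] at hmon
    have hfoldm : (∫ x, (x - c)^2 ∂(μ t0)) = m t0 := rfl
    have hfoldW : (∫ x, x * (1 - x) * (x - c)^2 ∂(μ t0)) = W t0 := rfl
    rw [hfoldm, hfoldW] at hmon
    simp only [measure_univ, probReal_univ, ENNReal.toReal_one, smul_eq_mul, one_mul] at hmon
    have hWdiv : W t0 / cK < ε/8 := by
      rw [div_lt_iff₀ hcKpos]
      calc W t0 < cK * (ε/8) := hWt0
        _ = ε/8 * cK := by ring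
    have hm0 : m t0 ≤ ε/2 := by
      have := hG0int t0 ht0
      have := hG1int t0 ht0
      linarith
    refine ⟨t0, ?_⟩
    intro s hs
    have hms : m s ≤ m t0 := hmanti (mem_Ici.2 ht0) (mem_Ici.2 (ht0.trans hs)) hs
    rw [Real.dist_eq, sub_zero, abs_of_nonneg (hmnn s)]
    linarith
  -- conclusion: weak convergence of the integrals
  rw [Metric.tendsto_atTop]
  intro ε hε
  obtain ⟨θ, hθpos, hθ⟩ := Metric.continuous_iff.mp hg c (ε/4) (by linarith)
  obtain ⟨M, hM⟩ := isCompact_Icc.exists_bound_of_continuousOn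
    ((show Continuous (fun x => g x - g c) from hg.sub continuous_const).continuousOn (s := Set.Icc (0:ℝ) 1))
  have hM0 : 0 ≤ M := le_trans (norm_nonneg _) (hM 0 ⟨le_rfl, zero_le_one⟩)
  set K : ℝ := (M + 1) / θ^2 with hKdef
  have hKpos : 0 < K := by positivity
  obtain ⟨T, hT⟩ := Metric.tendsto_atTop.mp hmlim ((ε/4)/K) (by positivity)
  refine ⟨max T 0, ?_⟩
  intro t ht
  have htT : T ≤ t := le_trans (le_max_left _ _) ht
  have ht0 : (0:ℝ) ≤ t := le_trans (le_max_right _ _) ht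
  haveI := hprob t
  have hintg : Integrable g (μ t) := integrable_of_cont (hsupp t) hg
  have h1 : (∫ x, g x ∂(μ t)) - g c = ∫ x, (g x - g c) ∂(μ t) := by
    rw [integral_sub hintg (integrable_const _), integral_const]
    simp [measure_univ]
  have h2 : |∫ x, (g x - g c) ∂(μ t)| ≤ ∫ x, |g x - g c| ∂(μ t) := by
    simpa [Real.norm_eq_abs] using
      norm_integral_le_integral_norm (μ := μ t) (fun x => g x - g c)
  have hpt : ∀ x ∈ Set.Icc (0:ℝ) 1, |g x - g c| ≤ ε/4 + K * (x - c)^2 := by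
    intro x hx
    have hk : 0 ≤ K * (x - c)^2 := mul_nonneg hKpos.le (sq_nonneg _)
    by_cases hcase : dist x c < θ
    · have hd := hθ x hcase
      rw [Real.dist_eq] at hd
      linarith [hd.le]
    · push_neg at hcase
      rw [Real.dist_eq] at hcase
      have habs := mul_self_le_mul_self hθpos.le hcase
      have hsq : θ^2 ≤ (x - c)^2 := by nlinarith [sq_abs (x - c)]
      have hKK : M + 1 ≤ K * (x - c)^2 := by
        rw [hKdef, div_mul_eq_mul_div, le_div_iff₀ (by positivity : (0:ℝ) < θ^2)]
        nlinarith
      have hMx := hM x hx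
      rw [Real.norm_eq_abs] at hMx
      linarith
  have h3 : ∫ x, |g x - g c| ∂(μ t) ≤ ∫ x, (ε/4 + K * (x - c)^2) ∂(μ t) :=
    int_mono (hsupp t) ((hg.sub continuous_const).abs)
      (continuous_const.add (continuous_const.mul hVcont)) hpt
  have h4 : (∫ x, (ε/4 + K * (x - c)^2) ∂(μ t)) = ε/4 + K * m t := by
    have ic : Integrable (fun x : ℝ => (x - c)^2) (μ t) :=
      integrable_of_cont (hsupp t) hVcont
    have iK : Integrable (fun x : ℝ => K * (x - c)^2) (μ t) := ic.const_mul K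
    rw [integral_add (integrable_const (ε/4)) iK, integral_const, integral_const_mul]
    have hfoldm : (∫ x, (x - c)^2 ∂(μ t)) = m t := rfl
    rw [hfoldm]
    simp [measure_univ]
  have h5 : m t < (ε/4)/K := by
    have hd := hT t htT
    rwa [Real.dist_eq, sub_zero, abs_of_nonneg (hmnn t)] at hd
  have h6 : K * m t < ε/4 := by
    rw [lt_div_iff₀ hKpos] at h5
    nlinarith
  rw [Real.dist_eq]
  calc |(∫ x, g x ∂(μ t)) - g c| = |∫ x, (g x - g c) ∂(μ t)| := by rw [h1]
    _ ≤ ∫ x, |g x - g c| ∂(μ t) := h2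
    _ ≤ ∫ x, (ε/4 + K * (x - c)^2) ∂(μ t) := h3
    _ = ε/4 + K * m t := h4
    _ < ε := by linarith
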